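/- Let J be the (n+1)×(n+1) lower bidiagonal matrix (indexed from 0) with J_{ii} = −δ−μ for 0 ≤ i ≤ n−1, J_{nn} = −μ, and J_{i+1,i} = δ for 0 ≤ i ≤ n−1, where δ, μ > 0, and let P be the matrix whose last row is all ones and all other rows zero. Then for every κ < δ, e^{κt}·‖e^{μt}·exp(tJ) − P‖ → 0 as t → ∞. Consequently, for any initial vector S₀ with nonnegative entries summing to 1, the solution S(t) of S' = J S + μ e_n converges to e_n (the last standard basis vector), and for every κ < μ, e^{κt}‖S(t) − e_n‖ → 0. -/

import Mathlib

open Filter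

/-- The operator (spectral) norm of a real matrix, viewed as a linear map
between Euclidean spaces. -/
noncomputable def matOpNorm {m n : ℕ} (M : Matrix (Fin m) (Fin n) ℝ) : ℝ :=
  ‖LinearMap.toContinuousLinearMap (Matrix.toEuclideanLin M)‖

/-- The Euclidean norm of a vector in `Fin m → ℝ`. -/
noncomputable def vecNorm {m : ℕ} (v : Fin m → ℝ) : ℝ :=
  Real.sqrt (∑ i, v i ^ 2)

section AuxAnalysis
variable {𝔸 : Type*} [NormedRing 𝔸] [NormedAlgebra ℝ 𝔸] [CompleteSpace 𝔸]
variable {𝔹 : Type*} [NormedAddCommGroup 𝔹] [NormedSpace ℝ 𝔹]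

lemma aux_tendsto_exp_mul_pow (c : ℝ) (hc : c < 0) (k : ℕ) :
    Tendsto (fun t : ℝ => Real.exp (c * t) * t ^ k) atTop (nhds 0) := by
  have h1 : Tendsto (fun t : ℝ => (-c) * t) atTop atTop :=
    Tendsto.const_mul_atTop (by linarith) tendsto_id
  have h2 := (Real.tendsto_pow_mul_exp_neg_atTop_nhds_zero k).comp h1
  have h3 : Tendsto (fun t : ℝ => (((-c) * t) ^ k * Real.exp (-((-c) * t))) * ((-c) ^ k)⁻¹)
      atTop (nhds (0 * ((-c) ^ k)⁻¹)) := h2.mul_const _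
  rw [zero_mul] at h3
  refine h3.congr (fun t => ?_)
  have hck : ((-c) : ℝ) ^ k ≠ 0 := pow_ne_zero _ (by linarith)
  rw [mul_pow, show -(-c*t) = c*t by ring]
  field_simp

lemma aux_exp_nilp (x : 𝔸) (m : ℕ) (h : x ^ m = 0) :
    NormedSpace.exp x = ∑ k ∈ Finset.range m, ((Nat.factorial k : ℝ))⁻¹ • x ^ k := by
  rw [NormedSpace.exp_eq_tsum ℝ]
  refine tsum_eq_sum ?_
  intro k hk
  have hk' : m ≤ k := by simpa using hk
  have : x ^ k = 0 := by
    rw [← Nat.add_sub_cancel' hk', pow_add, h, zero_mul]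
  simp [this]

lemma aux_exp_smul_one (c : ℝ) : NormedSpace.exp (c • (1:𝔸)) = Real.exp c • 1 := by
  rw [← Algebra.algebraMap_eq_smul_one, ← NormedSpace.algebraMap_exp_comm,
    Real.exp_eq_exp_ℝ, Algebra.algebraMap_eq_smul_one]

set_option maxHeartbeats 1000000 in
lemma aux_exp_idem (c : ℝ) (Q : 𝔸) (hQ : Q * Q = Q) :
    NormedSpace.exp (c • Q) = 1 + (Real.exp c - 1) • Q := by
  have hpow : ∀ k : ℕ, Q ^ (k + 1) = Q := by
    intro k; induction k with
    | zero => simp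
    | succ k ih => rw [pow_succ, ih, hQ]
  have hsum : Summable (fun k : ℕ => ((Nat.factorial k : ℝ))⁻¹ • (c • Q) ^ k) :=
    NormedSpace.expSeries_summable' (c • Q)
  have hre : Summable (fun k : ℕ => ((Nat.factorial k : ℝ))⁻¹ • c ^ k) :=
    NormedSpace.expSeries_summable' (𝕂 := ℝ) c
  have hre' : Summable (fun k : ℕ => ((Nat.factorial (k+1) : ℝ))⁻¹ • c ^ (k+1)) :=
    (summable_nat_add_iff 1).mpr hre
  have hshift : ∑' k : ℕ, ((Nat.factorial (k+1) : ℝ))⁻¹ • c ^ (k+1) = Real.exp c - 1 := by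
    have h0 : Real.exp c = ∑' k : ℕ, ((Nat.factorial k : ℝ))⁻¹ • c ^ k := by
      rw [Real.exp_eq_exp_ℝ, NormedSpace.exp_eq_tsum ℝ]
    rw [Summable.tsum_eq_zero_add hre] at h0
    simp only [pow_zero, Nat.factorial_zero, Nat.cast_one, inv_one, smul_eq_mul, mul_one] at h0
    simp only [smul_eq_mul]; linarith [h0]
  simp only [NormedSpace.exp_eq_tsum ℝ]
  rw [Summable.tsum_eq_zero_add hsum]
  have hterm : ∀ k : ℕ, ((Nat.factorial (k+1) : ℝ))⁻¹ • (c • Q) ^ (k+1)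
      = (((Nat.factorial (k+1) : ℝ))⁻¹ • c ^ (k+1)) • Q := by
    intro k
    rw [smul_pow, hpow, smul_smul, smul_eq_mul]
  simp only [hterm]
  rw [Summable.tsum_smul_const hre', hshift]
  simp

lemma aux_key (δ μ : ℝ) (A p N : 𝔸) (m : ℕ) (hp : p*p = p) (hpN : p*N = 0) (hNp : N*p = 0)
    (hA : A = (-δ-μ) • (1:𝔸) + δ • p + N) (hnil : N^(m+1) = 0) (t : ℝ) :
    Real.exp (μ*t) • NormedSpace.exp (t•A) - p
      = Real.exp (-(δ*t)) • (NormedSpace.exp (t•N) - p) := by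
  have h1 : t•A = ((-δ-μ)*t) • (1:𝔸) + (((δ*t)) • p + t • N) := by rw [hA]; module
  have c1 : Commute (((-δ-μ)*t) • (1:𝔸)) ((δ*t) • p + t • N) :=
    (Commute.one_left _).smul_left _
  have c2 : Commute ((δ*t) • p) (t • N) := by
    unfold Commute SemiconjBy
    rw [smul_mul_assoc, mul_smul_comm, smul_mul_assoc, mul_smul_comm, hpN, hNp]
    simp
  have hPexp : p * NormedSpace.exp (t•N) = p := by
    have hnil' : (t•N)^(m+1) = 0 := by rw [smul_pow, hnil, smul_zero]
    rw [aux_exp_nilp (t•N) (m+1) hnil', Finset.mul_sum, Finset.sum_range_succ']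
    have hz : ∀ k, p * (((Nat.factorial (k+1) : ℝ))⁻¹ • (t•N)^(k+1)) = 0 := by
      intro k
      have hN : p * N^(k+1) = 0 := by
        rw [pow_succ', ← mul_assoc, hpN, zero_mul]
      rw [smul_pow, mul_smul_comm, mul_smul_comm, hN, smul_zero, smul_zero]
    simp [hz]
  rw [h1, NormedSpace.exp_add_of_commute_of_mem_ball (𝕂 := ℝ) c1 (by rw [NormedSpace.expSeries_radius_eq_top]; exact edist_lt_top _ _) (by rw [NormedSpace.expSeries_radius_eq_top]; exact edist_lt_top _ _),
    NormedSpace.exp_add_of_commute_of_mem_ball (𝕂 := ℝ) c2 (by rw [NormedSpace.expSeries_radius_eq_top]; exact edist_lt_top _ _) (by rw [NormedSpace.expSeries_radius_eq_top]; exact edist_lt_top _ _),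
    aux_exp_smul_one, aux_exp_idem (δ*t) p hp]
  rw [smul_mul_assoc, one_mul, add_mul, one_mul, smul_mul_assoc, hPexp]
  have e1 : Real.exp (μ*t) * Real.exp ((-δ-μ)*t) = Real.exp (-(δ*t)) := by
    rw [← Real.exp_add]; ring_nf
  have e2 : Real.exp (-(δ*t)) * (Real.exp (δ*t) - 1) = 1 - Real.exp (-(δ*t)) := by
    rw [mul_sub, ← Real.exp_add, neg_add_cancel, Real.exp_zero, mul_one]
  rw [smul_smul, e1, smul_add, smul_smul, e2, smul_sub]
  module

lemma aux_norm_bound (L : 𝔸 →ₗ[ℝ] 𝔹) (p N : 𝔸) (m : ℕ) (hnil : N^(m+1) = 0)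
    (t : ℝ) (ht : 0 ≤ t) :
    ‖L (NormedSpace.exp (t•N) - p)‖
      ≤ (∑ k ∈ Finset.range (m+1), t^k * (((Nat.factorial k : ℝ))⁻¹ * ‖L (N^k)‖)) + ‖L p‖ := by
  have hnil' : (t•N)^(m+1) = 0 := by rw [smul_pow, hnil, smul_zero]
  rw [aux_exp_nilp (t•N) (m+1) hnil', map_sub, map_sum]
  refine (norm_sub_le _ _).trans (add_le_add ?_ le_rfl)
  refine (norm_sum_le _ _).trans (Finset.sum_le_sum ?_)
  intro k _
  rw [smul_pow, smul_smul, map_smul, norm_smul]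
  have h1 : |((Nat.factorial k : ℝ))⁻¹ * t^k| = ((Nat.factorial k : ℝ))⁻¹ * t^k := by
    rw [abs_of_nonneg]; positivity
  rw [Real.norm_eq_abs, h1]
  ring_nf
  exact le_rfl

lemma aux_g_tendsto (c : ℝ) (hc : c < 0) (m : ℕ) (C : ℕ → ℝ) (B : ℝ) :
    Tendsto (fun t : ℝ =>
      (∑ k ∈ Finset.range (m+1), (Real.exp (c*t) * t^k) * C k) + Real.exp (c*t) * B)
      atTop (nhds 0) := by
  have h1 : Tendsto (fun t : ℝ => ∑ k ∈ Finset.range (m+1), (Real.exp (c*t) * t^k) * C k)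
      atTop (nhds 0) := by
    have := tendsto_finset_sum (Finset.range (m+1))
      (fun k (_ : k ∈ Finset.range (m+1)) => (aux_tendsto_exp_mul_pow c hc k).mul_const (C k))
    simpa using this
  have h2 : Tendsto (fun t : ℝ => Real.exp (c*t) * B) atTop (nhds 0) := by
    have := (aux_tendsto_exp_mul_pow c hc 0).mul_const B
    simpa using this
  simpa using h1.add h2

lemma aux_main1 (δ μ κ : ℝ) (hκ : κ < δ) (L : 𝔸 →ₗ[ℝ] 𝔹) (A p N : 𝔸) (m : ℕ)
    (hnil : N^(m+1) = 0)
    (hkey : ∀ t : ℝ, Real.exp (μ*t) • NormedSpace.exp (t•A) - p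
      = Real.exp (-(δ*t)) • (NormedSpace.exp (t•N) - p)) :
    Tendsto (fun t : ℝ =>
        Real.exp (κ*t) * ‖L (Real.exp (μ*t) • NormedSpace.exp (t•A) - p)‖)
      atTop (nhds 0) := by
  have hg := aux_g_tendsto (κ-δ) (by linarith) m
    (fun k => ((Nat.factorial k : ℝ))⁻¹ * ‖L (N^k)‖) ‖L p‖
  refine squeeze_zero' ?_ ?_ hg
  · filter_upwards with t; positivity
  · filter_upwards [eventually_ge_atTop (0:ℝ)] with t ht
    rw [hkey t, map_smul, norm_smul, Real.norm_eq_abs, Real.abs_exp, ← mul_assoc, ← Real.exp_add,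
      show κ*t + -(δ*t) = (κ-δ)*t by ring]
    calc Real.exp ((κ-δ)*t) * ‖L (NormedSpace.exp (t•N) - p)‖
        ≤ Real.exp ((κ-δ)*t) *
            ((∑ k ∈ Finset.range (m+1), t^k * (((Nat.factorial k : ℝ))⁻¹ * ‖L (N^k)‖)) + ‖L p‖) :=
          mul_le_mul_of_nonneg_left (aux_norm_bound L p N m hnil t ht) (Real.exp_nonneg _)
      _ = _ := by
          rw [mul_add, Finset.mul_sum]
          congr 1
          exact Finset.sum_congr rfl (fun k _ => by ring)

lemma aux_main2 (δ μ κ : ℝ) (hδ : 0 < δ) (hκ : κ < μ) (L : 𝔸 →ₗ[ℝ] 𝔹) (A p N : 𝔸) (m : ℕ)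
    (hnil : N^(m+1) = 0)
    (hkey : ∀ t : ℝ, Real.exp (μ*t) • NormedSpace.exp (t•A) - p
      = Real.exp (-(δ*t)) • (NormedSpace.exp (t•N) - p)) :
    Tendsto (fun t : ℝ => Real.exp (κ*t) * ‖L (NormedSpace.exp (t•A))‖) atTop (nhds 0) := by
  have hrep : ∀ t : ℝ, NormedSpace.exp (t•A)
      = Real.exp (-(μ*t)) • (p + Real.exp (-(δ*t)) • (NormedSpace.exp (t•N) - p)) := by
    intro t
    have h' : Real.exp (μ*t) • NormedSpace.exp (t•A)
        = p + Real.exp (-(δ*t)) • (NormedSpace.exp (t•N) - p) := by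
      rw [← hkey t]; abel
    calc NormedSpace.exp (t•A)
        = (Real.exp (-(μ*t)) * Real.exp (μ*t)) • NormedSpace.exp (t•A) := by
          rw [← Real.exp_add]; simp
      _ = Real.exp (-(μ*t)) • (Real.exp (μ*t) • NormedSpace.exp (t•A)) := mul_smul _ _ _
      _ = _ := by rw [h']
  have hg1 := aux_g_tendsto (κ-μ-δ) (by linarith) m
    (fun k => ((Nat.factorial k : ℝ))⁻¹ * ‖L (N^k)‖) ‖L p‖
  have hg2 : Tendsto (fun t : ℝ => Real.exp ((κ-μ)*t) * ‖L p‖) atTop (nhds 0) := by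
    have := (aux_tendsto_exp_mul_pow (κ-μ) (by linarith) 0).mul_const ‖L p‖
    simpa using this
  have hg := hg2.add hg1
  rw [add_zero] at hg
  refine squeeze_zero' ?_ ?_ hg
  · filter_upwards with t; positivity
  · filter_upwards [eventually_ge_atTop (0:ℝ)] with t ht
    have hD := aux_norm_bound L p N m hnil t ht
    set D := ‖L (NormedSpace.exp (t•N) - p)‖ with hDdef
    have step1 : ‖L (NormedSpace.exp (t•A))‖
        ≤ Real.exp (-(μ*t)) * (‖L p‖ + Real.exp (-(δ*t)) * D) := by
      rw [hrep t, map_smul, norm_smul, Real.norm_eq_abs, Real.abs_exp]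
      refine mul_le_mul_of_nonneg_left ?_ (Real.exp_nonneg _)
      rw [map_add]
      refine (norm_add_le _ _).trans ?_
      rw [map_smul, norm_smul, Real.norm_eq_abs, Real.abs_exp]
    calc Real.exp (κ*t) * ‖L (NormedSpace.exp (t•A))‖
        ≤ Real.exp (κ*t) * (Real.exp (-(μ*t)) * (‖L p‖ + Real.exp (-(δ*t)) * D)) :=
          mul_le_mul_of_nonneg_left step1 (Real.exp_nonneg _)
      _ = Real.exp ((κ-μ)*t) * ‖L p‖ + Real.exp ((κ-μ-δ)*t) * D := by
          rw [show (κ-μ)*t = κ*t + -(μ*t) by ring, show (κ-μ-δ)*t = κ*t + -(μ*t) + -(δ*t) by ring,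
            Real.exp_add, Real.exp_add, Real.exp_add]
          ring
      _ ≤ Real.exp ((κ-μ)*t) * ‖L p‖ + Real.exp ((κ-μ-δ)*t) *
            ((∑ k ∈ Finset.range (m+1), t^k * (((Nat.factorial k : ℝ))⁻¹ * ‖L (N^k)‖)) + ‖L p‖) :=
          add_le_add le_rfl (mul_le_mul_of_nonneg_left hD (Real.exp_nonneg _))
      _ = _ := by
          congr 1
          rw [mul_add, Finset.mul_sum]
          congr 1
          exact Finset.sum_congr rfl (fun k _ => by ring)
end AuxAnalysis

lemma aux_tri_pow {m : ℕ} (M : Matrix (Fin m) (Fin m) ℝ)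
    (h : ∀ i j : Fin m, (i:ℕ) ≤ (j:ℕ) → M i j = 0) : M ^ m = 0 := by
  have key : ∀ k : ℕ, ∀ i j : Fin m, (i:ℕ) < (j:ℕ) + k → (M ^ k) i j = 0 := by
    intro k
    induction k with
    | zero =>
      intro i j hij
      rw [pow_zero]
      rw [Matrix.one_apply_ne]
      intro he; subst he; omega
    | succ k ih =>
      intro i j hij
      rw [pow_succ, Matrix.mul_apply]
      refine Finset.sum_eq_zero (fun l _ => ?_)
      by_cases hl : (i:ℕ) < (l:ℕ) + k
      · rw [ih i l hl, zero_mul]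
      · have : (l:ℕ) ≤ (j:ℕ) := by omega
        rw [h l j this, mul_zero]
  ext i j
  have := key m i j (by have := i.isLt; omega)
  simp [this]

section WithJ
variable {n : ℕ} {δ μ : ℝ} {J P : Matrix (Fin (n+1)) (Fin (n+1)) ℝ}
variable (hJ : ∀ i j : Fin (n + 1), J i j =
      if (i : ℕ) = (j : ℕ) then (if (i : ℕ) = n then -μ else -δ - μ)
      else if (i : ℕ) = (j : ℕ) + 1 then δ
      else 0)
variable (hP : ∀ i j : Fin (n + 1), P i j = if (i : ℕ) = n then 1 else 0)

include hP in
lemma auxP2 : ∀ i j : Fin (n+1), P i j = if i = Fin.last n then 1 else 0 := by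
  intro i j
  rw [hP]
  by_cases h : i = Fin.last n
  · subst h; simp
  · rw [if_neg h, if_neg (by simpa [Fin.ext_iff] using h)]

include hP in
lemma auxPP : P * P = P := by
  ext i j
  rw [Matrix.mul_apply]
  simp only [auxP2 hP]
  by_cases hi : i = Fin.last n <;> simp [hi, Finset.sum_ite_eq']

include hJ in
lemma auxColSum : ∀ j, ∑ k, J k j = -μ := by
  intro j
  by_cases hj : (j:ℕ) = n
  · have hval : ∀ k, J k j = if k = Fin.last n then -μ else 0 := by
      intro k
      have hk := k.isLt
      have e1 : (k = Fin.last n) ↔ (k:ℕ) = n := by rw [Fin.ext_iff]; simp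
      rw [hJ]
      simp only [e1, hj]
      split_ifs <;> first | rfl | omega | (exfalso; omega)
    simp [hval, Finset.sum_ite_eq']
  · have hjlt : (j:ℕ) < n := by have := j.isLt; omega
    have hsplit : ∀ k, J k j = (if k = j then (-δ-μ) else 0) + (if k = (⟨(j:ℕ)+1, by omega⟩ : Fin (n+1)) then δ else 0) := by
      intro k
      have hk := k.isLt
      have e1 : (k = j) ↔ (k:ℕ) = (j:ℕ) := Fin.ext_iff
      have e2 : (k = (⟨(j:ℕ)+1, by omega⟩ : Fin (n+1))) ↔ (k:ℕ) = (j:ℕ)+1 := by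
        rw [Fin.ext_iff]
      rw [hJ]
      simp only [e1, e2]
      split_ifs <;> first | ring1 | omega | (exfalso; omega)
    simp [hsplit, Finset.sum_add_distrib, Finset.sum_ite_eq']
    ring
include hJ hP in
lemma auxPJ : P * J = (-μ) • P := by
  ext i j
  rw [Matrix.mul_apply, Matrix.smul_apply]
  simp only [auxP2 hP]
  by_cases hi : i = Fin.last n
  · subst hi
    simp only [if_pos rfl, if_true, ite_true, one_mul, smul_eq_mul, mul_one]
    exact auxColSum hJ j
  · simp [hi]

include hJ hP in
lemma auxJP : J * P = (-μ) • P := by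
  ext i j
  rw [Matrix.mul_apply, Matrix.smul_apply]
  simp only [auxP2 hP, mul_ite, mul_one, mul_zero, Finset.sum_ite_eq', Finset.mem_univ, if_pos]
  have hi := i.isLt
  rw [hJ]
  by_cases h : (i:ℕ) = n
  · simp [Fin.val_last, h, show i = Fin.last n from Fin.ext (by simp [h])]
  · have h2 : ¬ (i:ℕ) = n + 1 := by omega
    simp [Fin.val_last, h, h2, show i ≠ Fin.last n from fun he => h (by simp [he, Fin.val_last])]

include hJ in
lemma auxJen : J.mulVec (Pi.single (Fin.last n) 1) = (-μ) • (Pi.single (Fin.last n) 1 : Fin (n+1) → ℝ) := by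
  ext i
  simp only [Matrix.mulVec, dotProduct]
  have hi := i.isLt
  simp only [Pi.single_apply, mul_ite, mul_one, mul_zero, Finset.sum_ite_eq', Finset.mem_univ,
    if_pos, Pi.smul_apply, smul_eq_mul]
  rw [hJ]
  by_cases h : (i:ℕ) = n
  · simp [Fin.val_last, h, show i = Fin.last n from Fin.ext (by simp [h])]
  · have h2 : ¬ (i:ℕ) = n + 1 := by omega
    simp [Fin.val_last, h, h2, show i ≠ Fin.last n from fun he => h (by simp [he, Fin.val_last])]

include hJ hP in
lemma auxNlow : ∀ i j : Fin (n+1), (i:ℕ) ≤ (j:ℕ) →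
    (J + (δ+μ) • (1 : Matrix (Fin (n+1)) (Fin (n+1)) ℝ) - δ • P) i j = 0 := by
  intro i j hij
  have hi := i.isLt
  have hj := j.isLt
  simp only [Matrix.sub_apply, Matrix.add_apply, Matrix.smul_apply, Matrix.one_apply,
    smul_eq_mul, hJ, hP]
  have e1 : (i = j) ↔ (i:ℕ) = (j:ℕ) := Fin.ext_iff
  simp only [e1]
  split_ifs <;> first | ring1 | omega | (exfalso; omega)
end WithJ


lemma vecNorm_eq {m : ℕ} (v : Fin m → ℝ) :
    vecNorm v = ‖(WithLp.equiv 2 (Fin m → ℝ)).symm v‖ := by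
  rw [show vecNorm v = Real.sqrt (∑ i, v i ^ 2) from rfl, EuclideanSpace.norm_eq]
  congr 1
  refine Finset.sum_congr rfl (fun i _ => ?_)
  rw [WithLp.equiv_symm_apply, PiLp.toLp_apply, Real.norm_eq_abs, sq_abs]

lemma vecNorm_nonneg {m : ℕ} (v : Fin m → ℝ) : 0 ≤ vecNorm v := Real.sqrt_nonneg _

lemma vecNorm_coord_le {m : ℕ} (v : Fin m → ℝ) (i : Fin m) : |v i| ≤ vecNorm v := by
  rw [show vecNorm v = Real.sqrt (∑ j, v j ^ 2) from rfl, ← Real.sqrt_sq_eq_abs]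
  apply Real.sqrt_le_sqrt
  exact Finset.single_le_sum (f := fun j => v j ^ 2) (fun j _ => sq_nonneg _) (Finset.mem_univ i)


theorem stmt_17 (n : ℕ) (δ μ : ℝ) (hδ : 0 < δ) (hμ : 0 < μ)
    (J : Matrix (Fin (n + 1)) (Fin (n + 1)) ℝ)
    (hJ : ∀ i j : Fin (n + 1), J i j =
      if (i : ℕ) = (j : ℕ) then (if (i : ℕ) = n then -μ else -δ - μ)
      else if (i : ℕ) = (j : ℕ) + 1 then δ
      else 0)
    (P : Matrix (Fin (n + 1)) (Fin (n + 1)) ℝ)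
    (hP : ∀ i j : Fin (n + 1), P i j = if (i : ℕ) = n then 1 else 0)
    (S : ℝ → Fin (n + 1) → ℝ)
    (hS0 : ∀ i, 0 ≤ S 0 i) (hSsum : ∑ i, S 0 i = 1)
    (hODE : ∀ (t : ℝ) (i : Fin (n + 1)),
      HasDerivAt (fun s => S s i)
        ((J.mulVec (S t) + μ • (Pi.single (Fin.last n) 1 : Fin (n + 1) → ℝ)) i) t) :
    (∀ κ < δ, Tendsto
        (fun t : ℝ => Real.exp (κ * t) *
          matOpNorm (Real.exp (μ * t) • NormedSpace.exp (t • J) - P))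
        atTop (nhds 0)) ∧
      (Tendsto (fun t : ℝ => S t) atTop
        (nhds (Pi.single (Fin.last n) 1 : Fin (n + 1) → ℝ))) ∧
      (∀ κ < μ, Tendsto
        (fun t : ℝ => Real.exp (κ * t) *
          vecNorm (S t - (Pi.single (Fin.last n) 1 : Fin (n + 1) → ℝ)))
        atTop (nhds 0)) := by
  classical
  letI : SeminormedRing (Matrix (Fin (n+1)) (Fin (n+1)) ℝ) := Matrix.linftyOpSemiNormedRing
  letI : NormedRing (Matrix (Fin (n+1)) (Fin (n+1)) ℝ) := Matrix.linftyOpNormedRing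
  letI : NormedAlgebra ℝ (Matrix (Fin (n+1)) (Fin (n+1)) ℝ) := Matrix.linftyOpNormedAlgebra
  -- matrix algebra facts
  have hPP := auxPP hP
  have hPJ := auxPJ hJ hP
  have hJP := auxJP hJ hP
  set Nm : Matrix (Fin (n+1)) (Fin (n+1)) ℝ :=
    J + (δ+μ) • (1 : Matrix (Fin (n+1)) (Fin (n+1)) ℝ) - δ • P with hNmdef
  have hnil0 : Nm ^ (n+1) = 0 := aux_tri_pow Nm (auxNlow hJ hP)
  have hpN : P * Nm = 0 := by
    rw [hNmdef, mul_sub, mul_add, Matrix.mul_smul, Matrix.mul_smul, mul_one, hPJ, hPP]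
    module
  have hNp : Nm * P = 0 := by
    rw [hNmdef, sub_mul, add_mul, Matrix.smul_mul, Matrix.smul_mul, one_mul, hJP, hPP]
    module
  have hdecomp : J = (-δ-μ) • (1 : Matrix (Fin (n+1)) (Fin (n+1)) ℝ) + δ • P + Nm := by
    rw [hNmdef]; module
  have hkey := fun t => aux_key δ μ J P Nm n hPP hpN hNp hdecomp hnil0 t
  -- the linear map realizing matOpNorm
  set L : Matrix (Fin (n+1)) (Fin (n+1)) ℝ →ₗ[ℝ]
      (EuclideanSpace ℝ (Fin (n+1)) →L[ℝ] EuclideanSpace ℝ (Fin (n+1))) :=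
    (Matrix.toEuclideanLin.trans LinearMap.toContinuousLinearMap).toLinearMap with hLdef
  have hmat : ∀ M : Matrix (Fin (n+1)) (Fin (n+1)) ℝ, matOpNorm M = ‖L M‖ := fun M => rfl
  -- Part 1
  have hpart1 : ∀ κ < δ, Tendsto
      (fun t : ℝ => Real.exp (κ * t) *
        matOpNorm (Real.exp (μ * t) • NormedSpace.exp (t • J) - P))
      atTop (nhds 0) := by
    intro κ hκ
    have h := aux_main1 δ μ κ hκ L J P Nm n hnil0 hkey
    exact h.congr (fun t => by rw [hmat]; rfl)
  -- the solution formula for S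
  set sgl : Fin (n+1) → ℝ := (Pi.single (Fin.last n) 1 : Fin (n+1) → ℝ) with hsgl
  set c : Fin (n+1) → ℝ := S 0 - sgl with hc
  let mv : Matrix (Fin (n+1)) (Fin (n+1)) ℝ →ₗ[ℝ] (Fin (n+1) → ℝ) :=
    { toFun := fun M => M.mulVec c
      map_add' := fun A B => Matrix.add_mulVec A B c
      map_smul' := fun r A => by simp [Matrix.smul_mulVec] }
  let mvC := LinearMap.toContinuousLinearMap mv
  set y : ℝ → (Fin (n+1) → ℝ) := fun u => sgl + mvC (NormedSpace.exp (u • J)) with hy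
  have hmvC : ∀ M : Matrix (Fin (n+1)) (Fin (n+1)) ℝ, mvC M = M.mulVec c := fun _ => rfl
  have hyd : ∀ t, HasDerivAt y (J.mulVec (y t) + μ • sgl) t := by
    intro t
    have h1 : HasDerivAt (fun u : ℝ => NormedSpace.exp (u • J))
        (J * NormedSpace.exp (t • J)) t := hasDerivAt_exp_smul_const' J t
    have h2 : HasDerivAt (fun u : ℝ => mvC (NormedSpace.exp (u • J)))
        (mvC (J * NormedSpace.exp (t • J))) t := mvC.hasFDerivAt.comp_hasDerivAt t h1
    have h3 : HasDerivAt y (mvC (J * NormedSpace.exp (t • J))) t := by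
      have := (hasDerivAt_const t sgl).add h2
      rw [zero_add] at this
      exact this
    have h4 : mvC (J * NormedSpace.exp (t • J)) = J.mulVec (y t) + μ • sgl := by
      rw [hmvC, ← Matrix.mulVec_mulVec]
      have h5 : (NormedSpace.exp (t • J)).mulVec c = y t - sgl := by
        rw [hy]; simp only [hmvC]; abel
      rw [h5, Matrix.mulVec_sub, auxJen hJ, neg_smul, sub_neg_eq_add]
    rwa [h4] at h3
  have hSd : ∀ t, HasDerivAt (fun s => S s) (J.mulVec (S t) + μ • sgl) t := by
    intro t
    set w : Fin (n+1) → ℝ := J.mulVec (S t) + μ • sgl with hw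
    have : ∀ i, HasFDerivAt (fun x => S x i)
        ((ContinuousLinearMap.proj i).comp ((1 : ℝ →L[ℝ] ℝ).smulRight w)) t := by
      intro i
      have heq : (ContinuousLinearMap.proj (R := ℝ) (φ := fun _ : Fin (n+1) => ℝ) i).comp
          ((1 : ℝ →L[ℝ] ℝ).smulRight w) = (1 : ℝ →L[ℝ] ℝ).smulRight (w i) := by
        ext r; simp
      rw [heq]
      exact hODE t i
    exact hasFDerivAt_pi'' this
  -- uniqueness
  let Jc := LinearMap.toContinuousLinearMap (Matrix.mulVecLin J)
  have hv : ∀ t : ℝ, LipschitzWith ‖Jc‖₊ (fun x : Fin (n+1) → ℝ => J.mulVec x + μ • sgl) := by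
    intro t x z
    have := Jc.lipschitz x z
    simpa [edist_add_right, Jc, Matrix.mulVecLin_apply] using this
  have h00 : S 0 = y 0 := by
    rw [hy]
    simp only [hmvC, zero_smul, NormedSpace.exp_zero, Matrix.one_mulVec, hc]
    abel
  have hagree : ∀ t : ℝ, 0 ≤ t → S t = y t := by
    intro t ht
    have := ODE_solution_unique (v := fun _ x => J.mulVec x + μ • sgl) hv (a := 0) (b := t)
      (fun u _ => (hSd u).continuousAt.continuousWithinAt)
      (fun u _ => (hSd u).hasDerivWithinAt)
      (fun u _ => (hyd u).continuousAt.continuousWithinAt)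
      (fun u _ => (hyd u).hasDerivWithinAt) h00
    exact this ⟨ht, le_refl t⟩
  -- Part 3
  have hpart3 : ∀ κ < μ, Tendsto
      (fun t : ℝ => Real.exp (κ * t) * vecNorm (S t - sgl)) atTop (nhds 0) := by
    intro κ hκ
    have hmain2 := aux_main2 δ μ κ hδ hκ L J P Nm n hnil0 hkey
    have hg := hmain2.mul_const (vecNorm c)
    rw [zero_mul] at hg
    refine squeeze_zero' ?_ ?_ hg
    · filter_upwards with t
      have := vecNorm_nonneg (S t - sgl)
      positivity
    · filter_upwards [eventually_ge_atTop (0:ℝ)] with t ht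
      rw [hagree t ht]
      have h5 : y t - sgl = (NormedSpace.exp (t • J)).mulVec c := by
        rw [hy]; simp only [hmvC]; abel
      rw [h5, vecNorm_eq, vecNorm_eq]
      have h6 : (WithLp.equiv 2 (Fin (n+1) → ℝ)).symm ((NormedSpace.exp (t • J)).mulVec c)
          = (L (NormedSpace.exp (t • J))) ((WithLp.equiv 2 (Fin (n+1) → ℝ)).symm c) := by
        show _ = Matrix.toEuclideanLin (NormedSpace.exp (t • J))
          ((WithLp.equiv 2 (Fin (n+1) → ℝ)).symm c)
        rfl
      rw [h6]
      calc Real.exp (κ*t) * ‖(L (NormedSpace.exp (t • J)))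
              ((WithLp.equiv 2 (Fin (n+1) → ℝ)).symm c)‖
          ≤ Real.exp (κ*t) * (‖L (NormedSpace.exp (t • J))‖ *
              ‖(WithLp.equiv 2 (Fin (n+1) → ℝ)).symm c‖) :=
            mul_le_mul_of_nonneg_left (ContinuousLinearMap.le_opNorm _ _) (Real.exp_nonneg _)
        _ = Real.exp (κ*t) * ‖L (NormedSpace.exp (t • J))‖ *
              ‖(WithLp.equiv 2 (Fin (n+1) → ℝ)).symm c‖ := (mul_assoc _ _ _).symm
  -- Part 2
  have hpart2 : Tendsto (fun t : ℝ => S t) atTop (nhds sgl) := by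
    have hvn : Tendsto (fun t => vecNorm (S t - sgl)) atTop (nhds 0) := by
      have := hpart3 0 hμ
      simpa using this
    rw [tendsto_pi_nhds]
    intro i
    rw [tendsto_iff_dist_tendsto_zero]
    refine squeeze_zero (fun t => dist_nonneg) (fun t => ?_) hvn
    rw [Real.dist_eq]
    have : S t i - sgl i = (S t - sgl) i := rfl
    rw [this]
    exact vecNorm_coord_le _ i
  exact ⟨hpart1, hpart2, hpart3⟩
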